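/- If Y = F(X, U) where U is a uniform random variable independent of (X, Z), and Y = E[φ(Z) | X, Y] almost surely for a bounded measurable φ, then Y is measurable with respect to σ(X) up to null sets, i.e., Y = G(X) a.s. for some measurable G. -/

import Mathlib

open MeasureTheory ProbabilityTheory

private abbrev mComap {Ω : Type*} (X : Ω → ℝ) : MeasurableSpace Ω :=
  MeasurableSpace.comap X inferInstance

private lemma ennreal_iSup_rat (a : ENNReal) :
    ⨆ (q : ℚ) (_ : (Real.toNNReal q : ENNReal) < a), (Real.toNNReal q : ENNReal) = a := by
  apply le_antisymm
  · exact iSup_le fun q => iSup_le fun h => h.le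
  · by_contra h
    push_neg at h
    obtain ⟨q, hq0, h1, h2⟩ := ENNReal.lt_iff_exists_rat_btwn.1 h
    exact absurd
      (le_iSup₂ (f := fun (q : ℚ) (_ : (Real.toNNReal q : ENNReal) < a) =>
        (Real.toNNReal q : ENNReal)) q h2) (not_le.2 h1)

private lemma factor_ennreal {Ω : Type*} {X : Ω → ℝ} {h : Ω → ENNReal}
    (hh : Measurable[MeasurableSpace.comap X inferInstance] h) :
    ∃ H : ℝ → ENNReal, Measurable H ∧ ∀ ω, h ω = H (X ω) := by
  have hs : ∀ q : ℚ, ∃ S : Set ℝ, MeasurableSet S ∧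
      X ⁻¹' S = {ω | (Real.toNNReal q : ENNReal) < h ω} := fun q => hh measurableSet_Ioi
  choose S hSmeas hSpre using hs
  refine ⟨fun x => ⨆ (q : ℚ) (_ : x ∈ S q), (Real.toNNReal q : ENNReal), ?_, ?_⟩
  · apply Measurable.iSup
    intro q
    have hind : (fun x => ⨆ (_ : x ∈ S q), (Real.toNNReal q : ENNReal))
        = (S q).indicator (fun _ => (Real.toNNReal q : ENNReal)) := by
      ext x; by_cases hx : x ∈ S q <;> simp [hx]
    rw [hind]
    exact measurable_const.indicator (hSmeas q)
  · intro ω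
    have key : ∀ q : ℚ, X ω ∈ S q ↔ (Real.toNNReal q : ENNReal) < h ω := by
      intro q
      rw [← Set.mem_preimage, hSpre q]
      rfl
    simp only [key]
    exact (ennreal_iSup_rat (h ω)).symm

private lemma factor_real {Ω : Type*} {X : Ω → ℝ} {g : Ω → ℝ}
    (hg : Measurable[MeasurableSpace.comap X inferInstance] g) :
    ∃ G : ℝ → ℝ, Measurable G ∧ ∀ ω, g ω = G (X ω) := by
  obtain ⟨H₁, hH₁, hH₁eq⟩ := factor_ennreal (X := X) (h := fun ω => ENNReal.ofReal (g ω))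
    (ENNReal.measurable_ofReal.comp hg)
  obtain ⟨H₂, hH₂, hH₂eq⟩ := factor_ennreal (X := X) (h := fun ω => ENNReal.ofReal (-(g ω)))
    (ENNReal.measurable_ofReal.comp hg.neg)
  refine ⟨fun x => (H₁ x).toReal - (H₂ x).toReal,
    (ENNReal.measurable_toReal.comp hH₁).sub (ENNReal.measurable_toReal.comp hH₂), fun ω => ?_⟩
  show g ω = (H₁ (X ω)).toReal - (H₂ (X ω)).toReal
  rw [← hH₁eq ω, ← hH₂eq ω, ENNReal.toReal_ofReal', ENNReal.toReal_ofReal',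
    max_zero_sub_max_neg_zero_eq_self]

/-- If `Y = F(X, U)` with `U` uniform on `[0,1]` independent of `(X, Z)`, and `Y`
satisfies the fixed-point relation `Y = E[φ(Z) | X, Y]` a.s. for a bounded measurable
`φ`, then `Y` is σ(X)-measurable up to null sets: `Y = G(X)` a.s. for some measurable `G`. -/
theorem fixed_point_condexp_measurable_of_noise
    {Ω : Type*} {mΩ : MeasurableSpace Ω} [StandardBorelSpace Ω]
    (μ : Measure Ω) [IsProbabilityMeasure μ]
    (X Z Y U : Ω → ℝ)
    (hX : Measurable X) (hZ : Measurable Z) (hY : Measurable Y) (hU : Measurable U)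
    (hunif : μ.map U = volume.restrict (Set.Icc (0 : ℝ) 1))
    (hindep : IndepFun U (fun ω => (X ω, Z ω)) μ)
    (F : ℝ × ℝ → ℝ) (hF : Measurable F)
    (hYF : ∀ ω, Y ω = F (X ω, U ω))
    (φ : ℝ → ℝ) (hφ : Measurable φ) (hφb : ∃ C, ∀ z, |φ z| ≤ C)
    (hfix : Y =ᵐ[μ] condExp
      (MeasurableSpace.comap X inferInstance ⊔ MeasurableSpace.comap Y inferInstance) μ
      (fun ω => φ (Z ω))) :
    ∃ G : ℝ → ℝ, Measurable G ∧ Y =ᵐ[μ] fun ω => G (X ω) := by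
  obtain ⟨C, hC⟩ := hφb
  set f : Ω → ℝ := fun ω => φ (Z ω) with hfdef
  have hmX : (mComap X) ≤ mΩ := hX.comap_le
  have hmU : (mComap U) ≤ mΩ := hU.comap_le
  have hmY : (mComap Y) ≤ mΩ := hY.comap_le
  have hmXU : (mComap X) ⊔ (mComap U) ≤ mΩ := sup_le hmX hmU
  have hmXY : (mComap X) ⊔ (mComap Y) ≤ mΩ := sup_le hmX hmY
  have hfmeas : Measurable[mΩ] f := hφ.comp hZ
  have hfint : Integrable f μ :=
    Integrable.mono' (integrable_const C) hfmeas.aestronglyMeasurable (μ := μ)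
      (Filter.Eventually.of_forall fun ω => by
        simpa [Real.norm_eq_abs] using hC (Z ω))
  -- factor the conditional expectation given `X` through `X`
  obtain ⟨G, hG, hGX⟩ := factor_real (X := X) (g := μ[f|(mComap X)])
    stronglyMeasurable_condExp.measurable
  have hGeq : (fun ω => G (X ω)) = μ[f|(mComap X)] := funext fun ω => (hGX ω).symm
  have hGXint : Integrable (fun ω => G (X ω)) μ := by
    rw [hGeq]; exact integrable_condExp
  have hGXmX : Measurable[(mComap X)] fun ω => G (X ω) :=
    hG.comp (comap_measurable X)
  -- key step: `E[φ(Z) | X, U] = E[φ(Z) | X] = G ∘ X`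
  have hkey : (fun ω => G (X ω)) =ᵐ[μ] μ[f|(mComap X) ⊔ (mComap U)] := by
    refine ae_eq_condExp_of_forall_setIntegral_eq hmXU hfint
      (fun s _ _ => hGXint.integrableOn) ?_
      (StronglyMeasurable.aestronglyMeasurable (hGXmX.mono (le_sup_left : mComap X ≤ mComap X ⊔ mComap U) le_rfl).stronglyMeasurable)
    set 𝒞 : Set (Set Ω) := {s | ∃ A B : Set ℝ,
      MeasurableSet A ∧ MeasurableSet B ∧ s = X ⁻¹' A ∩ U ⁻¹' B} with h𝒞
    have hgen : (mComap X) ⊔ (mComap U) = MeasurableSpace.generateFrom 𝒞 := by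
      apply le_antisymm
      · refine sup_le ?_ ?_
        · intro s hs
          obtain ⟨A, hA, rfl⟩ := hs
          exact MeasurableSpace.measurableSet_generateFrom
            ⟨A, Set.univ, hA, MeasurableSet.univ, by simp⟩
        · intro s hs
          obtain ⟨B, hB, rfl⟩ := hs
          exact MeasurableSpace.measurableSet_generateFrom
            ⟨Set.univ, B, MeasurableSet.univ, hB, by simp⟩
      · refine MeasurableSpace.generateFrom_le ?_
        rintro s ⟨A, B, hA, hB, rfl⟩
        exact MeasurableSet.inter ((le_sup_left : (mComap X) ≤ (mComap X) ⊔ (mComap U)) _ ⟨A, hA, rfl⟩)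
          ((le_sup_right : (mComap U) ≤ (mComap X) ⊔ (mComap U)) _ ⟨B, hB, rfl⟩)
    have hpi : IsPiSystem 𝒞 := by
      rintro s ⟨A₁, B₁, hA₁, hB₁, rfl⟩ t ⟨A₂, B₂, hA₂, hB₂, rfl⟩ _
      refine ⟨A₁ ∩ A₂, B₁ ∩ B₂, hA₁.inter hA₂, hB₁.inter hB₂, ?_⟩
      ext ω
      simp only [Set.mem_inter_iff, Set.mem_preimage]
      tauto
    intro s hs _
    revert s
    have main : ∀ s, MeasurableSet[(mComap X) ⊔ (mComap U)] s →
        ∫ x in s, G (X x) ∂μ = ∫ x in s, f x ∂μ := by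
      refine MeasurableSpace.induction_on_inter (α := Ω)
        (C := fun s _ => ∫ x in s, G (X x) ∂μ = ∫ x in s, f x ∂μ) (s := 𝒞) (m := (mComap X) ⊔ (mComap U))
        hgen hpi (by simp) ?_ ?_ ?_
      · -- basic case : s = X⁻¹' A ∩ U⁻¹' B
        rintro s ⟨A, B, hA, hB, rfl⟩
        have hprod : ∀ (ψ : ℝ × ℝ → ℝ), Measurable ψ →
            Integrable (fun ω => ψ (X ω, Z ω)) μ →
            ∫ ω in X ⁻¹' A ∩ U ⁻¹' B, ψ (X ω, Z ω) ∂μ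
              = (∫ ω in X ⁻¹' A, ψ (X ω, Z ω) ∂μ) * (μ (U ⁻¹' B)).toReal := by
          intro ψ hψ hψint
          set ψA : ℝ × ℝ → ℝ := fun p => Set.indicator A (fun _ => (1:ℝ)) p.1 * ψ p with hψA
          set χB : ℝ → ℝ := Set.indicator B (fun _ => (1:ℝ)) with hχB
          have hψAm : Measurable ψA :=
            ((measurable_const.indicator hA).comp measurable_fst).mul hψ
          have hχBm : Measurable χB := measurable_const.indicator hB
          have hψAeq : (fun ω => ψA (X ω, Z ω))
              = Set.indicator (X ⁻¹' A) (fun ω => ψ (X ω, Z ω)) := by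
            funext ω
            by_cases h1 : X ω ∈ A <;> simp [ψA, Set.indicator_apply, h1]
          have hχBeq : (fun ω => χB (U ω))
              = Set.indicator (U ⁻¹' B) (fun _ => (1:ℝ)) := by
            funext ω
            by_cases h2 : U ω ∈ B <;> simp [χB, Set.indicator_apply, h2]
          have hid : ∀ ω, Set.indicator (X ⁻¹' A ∩ U ⁻¹' B) (fun ω => ψ (X ω, Z ω)) ω
              = ψA (X ω, Z ω) * χB (U ω) := by
            intro ω
            by_cases h1 : X ω ∈ A <;> by_cases h2 : U ω ∈ B <;>
              simp [ψA, χB, Set.indicator_apply, h1, h2]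
          have hindep2 : IndepFun (fun ω => ψA (X ω, Z ω)) (fun ω => χB (U ω)) μ :=
            (hindep.comp hχBm hψAm).symm
          have hψAint : Integrable (fun ω => ψA (X ω, Z ω)) μ := by
            rw [hψAeq]; exact hψint.indicator (hX hA)
          have hχBint : Integrable (fun ω => χB (U ω)) μ := by
            rw [hχBeq]; exact (integrable_const 1).indicator (hU hB)
          have hmul := hindep2.integral_mul_eq_mul_integral hψAint.aestronglyMeasurable hχBint.aestronglyMeasurable
          calc ∫ ω in X ⁻¹' A ∩ U ⁻¹' B, ψ (X ω, Z ω) ∂μ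
              = ∫ ω, Set.indicator (X ⁻¹' A ∩ U ⁻¹' B) (fun ω => ψ (X ω, Z ω)) ω ∂μ :=
                (integral_indicator ((hX hA).inter (hU hB))).symm
            _ = ∫ ω, ψA (X ω, Z ω) * χB (U ω) ∂μ := by
                exact integral_congr_ae (Filter.Eventually.of_forall hid)
            _ = (∫ ω, ψA (X ω, Z ω) ∂μ) * ∫ ω, χB (U ω) ∂μ := hmul
            _ = (∫ ω in X ⁻¹' A, ψ (X ω, Z ω) ∂μ) * (μ (U ⁻¹' B)).toReal := by
                rw [hψAeq, hχBeq, integral_indicator (hX hA), integral_indicator_const,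
                  smul_eq_mul, mul_one, measureReal_def]
                exact hU hB
        have h1 := hprod (fun p => G p.1) (hG.comp measurable_fst) hGXint
        have h2 := hprod (fun p => φ p.2) (hφ.comp measurable_snd) hfint
        simp only at h1 h2
        rw [show (∫ x in X ⁻¹' A ∩ U ⁻¹' B, G (X x) ∂μ)
            = ∫ ω in X ⁻¹' A ∩ U ⁻¹' B, (fun p => G p.1) (X ω, Z ω) ∂μ from rfl, h1,
          show (∫ x in X ⁻¹' A ∩ U ⁻¹' B, f x ∂μ)
            = ∫ ω in X ⁻¹' A ∩ U ⁻¹' B, (fun p => φ p.2) (X ω, Z ω) ∂μ from rfl, h2]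
        congr 1
        have : (∫ ω in X ⁻¹' A, G (X ω) ∂μ) = ∫ ω in X ⁻¹' A, (μ[f|(mComap X)]) ω ∂μ := by
          rw [hGeq]
        rw [show (∫ ω in X ⁻¹' A, (fun p => G p.1) (X ω, Z ω) ∂μ)
            = ∫ ω in X ⁻¹' A, G (X ω) ∂μ from rfl, this,
          setIntegral_condExp hmX hfint ⟨A, hA, rfl⟩]
      · -- complement
        intro t ht hP
        have ht' : MeasurableSet[mΩ] t := hmXU t ht
        have h1 := integral_add_compl ht' hGXint
        have h2 := integral_add_compl ht' hfint
        have h3 : ∫ ω, G (X ω) ∂μ = ∫ ω, f ω ∂μ := by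
          rw [hGeq]; exact integral_condExp hmX
        have h1' : (∫ x in t, G (X x) ∂μ) + ∫ x in tᶜ, G (X x) ∂μ = ∫ x, G (X x) ∂μ := h1
        have h2' : (∫ x in t, f x ∂μ) + ∫ x in tᶜ, f x ∂μ = ∫ x, f x ∂μ := h2
        linarith
      · -- countable disjoint union
        intro s hdisj hmeas hP
        have hs' : ∀ i, MeasurableSet[mΩ] (s i) := fun i => hmXU _ (hmeas i)
        rw [integral_iUnion hs' hdisj hGXint.integrableOn,
          integral_iUnion hs' hdisj hfint.integrableOn]
        exact tsum_congr hP
    exact fun s hs _ => main s hs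
  -- `Y` is measurable with respect to `σ(X) ⊔ σ(U)`
  have hYmeas : Measurable[(mComap X) ⊔ (mComap U)] Y := by
    have hXm : Measurable[(mComap X) ⊔ (mComap U)] X :=
      (comap_measurable X).mono le_sup_left le_rfl
    have hUm : Measurable[(mComap X) ⊔ (mComap U)] U :=
      (comap_measurable U).mono le_sup_right le_rfl
    have hYe : Y = fun ω => F (X ω, U ω) := funext hYF
    rw [hYe]
    exact hF.comp (hXm.prodMk hUm)
  have hYsup : (mComap X) ⊔ (mComap Y) ≤ (mComap X) ⊔ (mComap U) := sup_le le_sup_left hYmeas.comap_le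
  refine ⟨G, hG, ?_⟩
  have tower : μ[μ[f|(mComap X) ⊔ (mComap U)]|(mComap X) ⊔ (mComap Y)] =ᵐ[μ] μ[f|(mComap X) ⊔ (mComap Y)] :=
    condExp_condExp_of_le hYsup hmXU
  have step2 : μ[μ[f|(mComap X) ⊔ (mComap U)]|(mComap X) ⊔ (mComap Y)] =ᵐ[μ] μ[(fun ω => G (X ω))|(mComap X) ⊔ (mComap Y)] :=
    condExp_congr_ae hkey.symm
  have step3 : μ[(fun ω => G (X ω))|(mComap X) ⊔ (mComap Y)] = fun ω => G (X ω) :=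
    condExp_of_stronglyMeasurable hmXY
      ((hGXmX.mono (le_sup_left : mComap X ≤ mComap X ⊔ mComap Y)
        le_rfl).stronglyMeasurable) hGXint
  calc Y =ᵐ[μ] μ[f|(mComap X) ⊔ (mComap Y)] := hfix
    _ =ᵐ[μ] μ[μ[f|(mComap X) ⊔ (mComap U)]|(mComap X) ⊔ (mComap Y)] := tower.symm
    _ =ᵐ[μ] μ[(fun ω => G (X ω))|(mComap X) ⊔ (mComap Y)] := step2
    _ = fun ω => G (X ω) := step3
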